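/- Let U ∈ ℝ^{n×n} be orthogonal, h̃(Λ) diagonal with |h̃(λ_i)| ≤ 1 + e for k indices and |h̃(λ_i)| ≤ e for the remaining n − k indices, and R ∈ ℝ^{n×d} with ‖R‖_F² ≤ (1+ε)n. Then ‖U h̃(Λ) Uᵀ R‖_F² ≤ (1+ε)·n·(k + 2ke + ne²). -/
import Mathlib


open Matrix

/-- Let `U` be orthogonal, `h̃(Λ)` diagonal with `|h̃ i| ≤ 1 + e` on a set of `k`
indices and `|h̃ i| ≤ e` on the remaining `n − k` indices, and `R ∈ ℝ^{n×d}` with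
`‖R‖_F² ≤ (1+ε)n`. Then `‖U h̃(Λ) Uᵀ R‖_F² ≤ (1+ε)·n·(k + 2ke + ne²)`. -/
theorem frobenius_sq_approx_filter_le
    (n k d : ℕ) (U : Matrix (Fin n) (Fin n) ℝ) (htilde : Fin n → ℝ) (e ε : ℝ)
    (K : Finset (Fin n)) (R : Matrix (Fin n) (Fin d) ℝ)
    (hU : Uᵀ * U = 1) (he : 0 ≤ e) (hε : 0 ≤ ε)
    (hK : K.card = k)
    (hin : ∀ i ∈ K, |htilde i| ≤ 1 + e)
    (hout : ∀ i ∉ K, |htilde i| ≤ e)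
    (hR : ∑ i, ∑ j, (R i j) ^ 2 ≤ (1 + ε) * n) :
    ∑ i, ∑ j, ((U * Matrix.diagonal htilde * Uᵀ * R) i j) ^ 2
      ≤ (1 + ε) * n * ((k : ℝ) + 2 * k * e + n * e ^ 2) := by
  set M := U * Matrix.diagonal htilde * Uᵀ with hM
  -- Step 1 : Cauchy-Schwarz
  have step1 : ∑ i, ∑ j, ((M * R) i j) ^ 2
      ≤ (∑ i, ∑ l, (M i l) ^ 2) * (∑ l, ∑ j, (R l j) ^ 2) := by
    calc ∑ i, ∑ j, ((M * R) i j) ^ 2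
        ≤ ∑ i, ∑ j, (∑ l, (M i l) ^ 2) * (∑ l, (R l j) ^ 2) := by
          apply Finset.sum_le_sum; intro i _
          apply Finset.sum_le_sum; intro j _
          simpa [Matrix.mul_apply] using
            Finset.sum_mul_sq_le_sq_mul_sq Finset.univ (fun l => M i l) (fun l => R l j)
      _ = (∑ i, ∑ l, (M i l) ^ 2) * (∑ l, ∑ j, (R l j) ^ 2) := by
          rw [Finset.sum_mul]
          apply Finset.sum_congr rfl; intro i _
          rw [← Finset.mul_sum]
          congr 1
          exact Finset.sum_comm
  -- Step 2 : Frobenius norm of M equals sum of htilde²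
  have hUU : U * Uᵀ = 1 := mul_eq_one_comm.mp hU
  have step2 : ∑ i, ∑ l, (M i l) ^ 2 = ∑ i, (htilde i) ^ 2 := by
    have hMt : Mᵀ = M := by
      rw [hM]; simp [Matrix.transpose_mul, Matrix.diagonal_transpose, Matrix.mul_assoc]
    have h1 : Mᵀ * M = U * Matrix.diagonal (fun i => (htilde i)^2) * Uᵀ := by
      rw [hMt, hM]
      calc U * Matrix.diagonal htilde * Uᵀ * (U * Matrix.diagonal htilde * Uᵀ)
          = U * (Matrix.diagonal htilde * (Uᵀ * U) * Matrix.diagonal htilde) * Uᵀ := by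
            simp only [Matrix.mul_assoc]
        _ = U * Matrix.diagonal (fun i => (htilde i)^2) * Uᵀ := by
            rw [hU, Matrix.mul_one, Matrix.diagonal_mul_diagonal]
            congr 2
            funext i; ring
    have h2 : (Mᵀ * M).trace = ∑ i, (htilde i) ^ 2 := by
      rw [h1, Matrix.trace_mul_cycle, hU, Matrix.one_mul, Matrix.trace_diagonal]
    rw [← h2]
    simp [Matrix.trace, Matrix.mul_apply, Matrix.diag, sq]
    exact Finset.sum_comm
  -- Step 3 : sum of htilde² bounded
  have hkn : (k : ℝ) ≤ n := by
    have := K.card_le_univ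
    rw [hK] at this
    exact_mod_cast this.trans_eq (by simp)
  have step3 : ∑ i, (htilde i) ^ 2 ≤ (k : ℝ) + 2 * k * e + n * e ^ 2 := by
    have hsplit : ∑ i, (htilde i) ^ 2 = ∑ i ∈ K, (htilde i) ^ 2 + ∑ i ∈ Kᶜ, (htilde i) ^ 2 :=
      (Finset.sum_add_sum_compl K _).symm
    have hb1 : ∑ i ∈ K, (htilde i) ^ 2 ≤ (k : ℝ) * (1 + e) ^ 2 := by
      calc ∑ i ∈ K, (htilde i) ^ 2 ≤ ∑ i ∈ K, (1 + e) ^ 2 := by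
            apply Finset.sum_le_sum; intro i hi
            rw [← sq_abs]
            exact pow_le_pow_left₀ (abs_nonneg _) (hin i hi) 2
        _ = (k : ℝ) * (1 + e) ^ 2 := by rw [Finset.sum_const, hK]; simp [mul_comm]
    have hb2 : ∑ i ∈ Kᶜ, (htilde i) ^ 2 ≤ ((n - k : ℕ) : ℝ) * e ^ 2 := by
      calc ∑ i ∈ Kᶜ, (htilde i) ^ 2 ≤ ∑ i ∈ Kᶜ, e ^ 2 := by
            apply Finset.sum_le_sum; intro i hi
            rw [← sq_abs]
            exact pow_le_pow_left₀ (abs_nonneg _) (hout i (Finset.mem_compl.mp hi)) 2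
        _ = ((n - k : ℕ) : ℝ) * e ^ 2 := by
            rw [Finset.sum_const, Finset.card_compl, hK]
            simp [mul_comm]
    have hcast : ((n - k : ℕ) : ℝ) = (n : ℝ) - k := by
      have hk : k ≤ n := by exact_mod_cast hkn
      exact Nat.cast_sub hk
    rw [hsplit]
    calc ∑ i ∈ K, (htilde i)^2 + ∑ i ∈ Kᶜ, (htilde i)^2
        ≤ (k : ℝ) * (1 + e)^2 + ((n : ℝ) - k) * e^2 := by
          rw [← hcast]; exact add_le_add hb1 hb2
      _ = (k : ℝ) + 2 * k * e + n * e ^ 2 := by ring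
  -- combine
  have hSR : (0:ℝ) ≤ ∑ l, ∑ j, (R l j) ^ 2 :=
    Finset.sum_nonneg fun _ _ => Finset.sum_nonneg fun _ _ => sq_nonneg _
  have hSM : (0:ℝ) ≤ ∑ i, ∑ l, (M i l) ^ 2 :=
    Finset.sum_nonneg fun _ _ => Finset.sum_nonneg fun _ _ => sq_nonneg _
  have hbound : (0:ℝ) ≤ (k : ℝ) + 2 * k * e + n * e ^ 2 := by positivity
  calc ∑ i, ∑ j, ((M * R) i j) ^ 2
      ≤ (∑ i, ∑ l, (M i l) ^ 2) * (∑ l, ∑ j, (R l j) ^ 2) := step1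
    _ ≤ ((k : ℝ) + 2 * k * e + n * e ^ 2) * ((1 + ε) * n) := by
        apply mul_le_mul (step2 ▸ step3) hR hSR hbound
    _ = (1 + ε) * n * ((k : ℝ) + 2 * k * e + n * e ^ 2) := by ring
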